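/- With notation as above (h ∈ ℝ^k mean-zero with E[h hᵀ] invertible, X scalar square-integrable), if k ≤ m and h is the truncation of a vector h' ∈ ℝ^m with E[h' h'ᵀ] invertible, then b'ᵀ C'⁻¹ b' ≥ bᵀ C⁻¹ b, where b' = E[X h'], C' = E[h' h'ᵀ]; i.e., the optimal information is monotone nondecreasing in the number of component estimating functions. -/

import Mathlib

open MeasureTheory Matrix

/-- Monotonicity of the optimal information `bᵀC⁻¹b` in the number of
component estimating functions: if `h` is a truncation of `h'`, then
`bᵀC⁻¹b ≤ b'ᵀC'⁻¹b'`. -/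
theorem stmt_9 {Ω : Type*} [MeasurableSpace Ω] (μ : Measure Ω)
    [IsProbabilityMeasure μ] {k m : ℕ} (hkm : k ≤ m)
    (X : Ω → ℝ) (h' : Fin m → Ω → ℝ)
    (hX : MemLp X 2 μ) (hh : ∀ i, MemLp (h' i) 2 μ)
    (hmean : ∀ i, ∫ ω, h' i ω ∂μ = 0)
    (C' : Matrix (Fin m) (Fin m) ℝ)
    (hC' : ∀ i j, C' i j = ∫ ω, h' i ω * h' j ω ∂μ) [Invertible C']
    (b' : Fin m → ℝ) (hb' : ∀ i, b' i = ∫ ω, X ω * h' i ω ∂μ)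
    (C : Matrix (Fin k) (Fin k) ℝ)
    (hC : ∀ i j, C i j = C' (Fin.castLE hkm i) (Fin.castLE hkm j)) [Invertible C]
    (b : Fin k → ℝ) (hb : ∀ i, b i = b' (Fin.castLE hkm i)) :
    b ⬝ᵥ (C⁻¹ *ᵥ b) ≤ b' ⬝ᵥ (C'⁻¹ *ᵥ b') := by
  -- integrability of products
  have hint : ∀ i j : Fin m, Integrable (fun ω => h' i ω * h' j ω) μ := by
    intro i j
    have h1 : MemLp ((h' i) • (h' j)) 1 μ :=
      (hh j).smul (hh i)
    simpa [Pi.smul_apply, smul_eq_mul] using (memLp_one_iff_integrable.mp h1 : Integrable (fun ω => h' i ω * h' j ω) μ)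
  -- symmetry of C'
  have hsymm : C'ᵀ = C' := by
    ext i j
    simp only [Matrix.transpose_apply, hC']
    simp_rw [mul_comm]
  -- positive semidefiniteness of C'
  have hpsd : ∀ x : Fin m → ℝ, 0 ≤ x ⬝ᵥ (C' *ᵥ x) := by
    intro x
    have key : x ⬝ᵥ (C' *ᵥ x) = ∫ ω, (∑ i, x i * h' i ω) ^ 2 ∂μ := by
      have h1 : (fun ω => (∑ i, x i * h' i ω) ^ 2) =
          fun ω => ∑ i : Fin m, ∑ j : Fin m, (x i * x j) * (h' i ω * h' j ω) := by
        funext ω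
        rw [sq, Finset.sum_mul_sum]
        exact Finset.sum_congr rfl fun i _ => Finset.sum_congr rfl fun j _ => by ring
      rw [h1, integral_finset_sum _ (fun i _ =>
        integrable_finset_sum _ fun j _ => (hint i j).const_mul _)]
      rw [dotProduct]
      refine Finset.sum_congr rfl fun i _ => ?_
      rw [integral_finset_sum _ (fun j _ => (hint i j).const_mul _),
        Matrix.mulVec, dotProduct, Finset.mul_sum]
      refine Finset.sum_congr rfl fun j _ => ?_
      rw [integral_const_mul, hC']
      ring
    rw [key]
    exact integral_nonneg fun ω => sq_nonneg _
  -- sum over extension by zero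
  have hsum : ∀ f : Fin m → ℝ, (∀ i : Fin m, ¬ (i : ℕ) < k → f i = 0) →
      ∑ i, f i = ∑ j : Fin k, f (Fin.castLE hkm j) := by
    intro f hf
    have hm := Finset.sum_map Finset.univ (Fin.castLEEmb hkm) f
    simp only [Fin.castLEEmb_apply] at hm
    rw [← hm]
    refine (Finset.sum_subset (Finset.subset_univ _) ?_).symm
    intro i _ hi
    refine hf i fun hik => hi ?_
    simp only [Finset.mem_map, Finset.mem_univ, true_and]
    exact ⟨⟨i, hik⟩, rfl⟩
  set a : Fin k → ℝ := C⁻¹ *ᵥ b with ha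
  set a' : Fin m → ℝ := fun i => if hi : (i : ℕ) < k then a ⟨i, hi⟩ else 0 with ha'
  have ha'zero : ∀ i : Fin m, ¬ (i : ℕ) < k → a' i = 0 := fun i hi => dif_neg hi
  have ha'cast : ∀ j : Fin k, a' (Fin.castLE hkm j) = a j := by
    intro j
    simp only [ha', Fin.coe_castLE, j.isLt, dif_pos]
  -- E1 : a' ⬝ᵥ b' = a ⬝ᵥ b
  have hE1 : a' ⬝ᵥ b' = a ⬝ᵥ b := by
    rw [dotProduct, dotProduct,
      hsum _ (fun i hi => by rw [ha'zero i hi, zero_mul])]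
    exact Finset.sum_congr rfl fun j _ => by rw [ha'cast, hb]
  -- E2 : a' ⬝ᵥ C' *ᵥ a' = a ⬝ᵥ C *ᵥ a
  have hE2 : a' ⬝ᵥ (C' *ᵥ a') = a ⬝ᵥ (C *ᵥ a) := by
    rw [dotProduct, dotProduct,
      hsum _ (fun i hi => by rw [ha'zero i hi, zero_mul])]
    refine Finset.sum_congr rfl fun j _ => ?_
    rw [ha'cast, Matrix.mulVec, Matrix.mulVec, dotProduct, dotProduct,
      hsum _ (fun i hi => by rw [ha'zero i hi, mul_zero])]
    refine congrArg _ (Finset.sum_congr rfl fun i _ => ?_)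
    rw [ha'cast, hC]
  -- C *ᵥ a = b
  have hCa : C *ᵥ a = b := by
    rw [ha, Matrix.mulVec_mulVec, Matrix.mul_inv_of_invertible, Matrix.one_mulVec]
  set u : Fin m → ℝ := C'⁻¹ *ᵥ b' with hu
  have hCu : C' *ᵥ u = b' := by
    rw [hu, Matrix.mulVec_mulVec, Matrix.mul_inv_of_invertible, Matrix.one_mulVec]
  -- cross-term symmetry: u ⬝ᵥ C' *ᵥ a' = a' ⬝ᵥ b'
  have hcross : u ⬝ᵥ (C' *ᵥ a') = a' ⬝ᵥ b' := by
    rw [Matrix.dotProduct_mulVec, ← Matrix.mulVec_transpose, hsymm, hCu,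
      dotProduct_comm]
  have huCu : u ⬝ᵥ (C' *ᵥ u) = b' ⬝ᵥ u := by
    rw [hCu, dotProduct_comm]
  have ha'Cu : a' ⬝ᵥ (C' *ᵥ u) = a' ⬝ᵥ b' := by rw [hCu]
  have hmain := hpsd (u - a')
  rw [Matrix.mulVec_sub, dotProduct_sub, sub_dotProduct,
    sub_dotProduct, huCu, hcross, ha'Cu, hE2, hCa] at hmain
  have hLHS : b ⬝ᵥ (C⁻¹ *ᵥ b) = a ⬝ᵥ b := by rw [← ha, dotProduct_comm]
  have hRHS : b' ⬝ᵥ (C'⁻¹ *ᵥ b') = b' ⬝ᵥ u := by rw [hu]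
  rw [hLHS, hRHS]
  rw [hE1] at hmain
  linarith [hmain]
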